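/- There exists an integer k_0 such that for all k ≥ k_0 the following holds: if X is any subset of the vertex set {0,1}^k of the unit cube with |X| ≥ 2, then there exists a Hamiltonian cycle H through X such that Σ_{e ∈ H} |e|^k ≤ 2·k^{k/2}; that is, the scaled cost s_k(H) = (Σ_{e ∈ H} |e|^k)^{1/k} is at most 2^{1/k}·√k. -/

import Mathlib

open Finset Filter Real

namespace TSP




variable {k : ℕ}

def IsCube {k : ℕ} (x : EuclideanSpace ℝ (Fin k)) : Prop := ∀ i, x i = 0 ∨ x i = 1

open scoped Classical in
noncomputable def ham {k : ℕ} (x y : EuclideanSpace ℝ (Fin k)) : ℕ :=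
  (Finset.univ.filter (fun t => x t ≠ y t)).card

open scoped Classical

lemma ham_le (x y : EuclideanSpace ℝ (Fin k)) : ham x y ≤ k := by
  classical
  calc ham x y ≤ Finset.univ.card := by
        unfold ham; convert Finset.card_filter_le _ _
    _ = k := by simp

lemma ham_symm (x y : EuclideanSpace ℝ (Fin k)) : ham x y = ham y x := by
  unfold ham; congr 1; apply Finset.filter_congr; intro t _
  constructor <;> intro h <;> exact fun e => h e.symm

lemma eq_of_ham_eq_zero {x y : EuclideanSpace ℝ (Fin k)} (h : ham x y = 0) : x = y := by
  classical
  unfold ham at h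
  rw [Finset.card_eq_zero, Finset.filter_eq_empty_iff] at h
  ext t
  have := h (Finset.mem_univ t)
  simpa using this

lemma ham_pos_of_ne {x y : EuclideanSpace ℝ (Fin k)} (h : x ≠ y) : 1 ≤ ham x y := by
  by_contra hc
  push_neg at hc
  exact h (eq_of_ham_eq_zero (by omega))

lemma sum_sq_eq_ham {x y : EuclideanSpace ℝ (Fin k)} (hx : IsCube x) (hy : IsCube y) :
    ∑ t, (x t - y t) ^ 2 = (ham x y : ℝ) := by
  classical
  unfold ham
  rw [Finset.card_filter]
  push_cast
  apply Finset.sum_congr rfl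
  intro t _
  rcases hx t with h1 | h1 <;> rcases hy t with h2 | h2 <;>
    simp [h1, h2] <;> norm_num

lemma dist_eq_sqrt_ham {x y : EuclideanSpace ℝ (Fin k)} (hx : IsCube x) (hy : IsCube y) :
    dist x y = Real.sqrt (ham x y) := by
  rw [EuclideanSpace.dist_eq]
  congr 1
  calc ∑ i, dist (x i) (y i) ^ 2 = ∑ t, (x t - y t) ^ 2 := by
        apply Finset.sum_congr rfl; intro t _; rw [Real.dist_eq, sq_abs]
    _ = (ham x y : ℝ) := sum_sq_eq_ham hx hy

lemma ham_le_of_dist_le {a b c d : EuclideanSpace ℝ (Fin k)}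
    (ha : IsCube a) (hb : IsCube b) (hc : IsCube c) (hd : IsCube d)
    (h : dist a b ≤ dist c d) : ham a b ≤ ham c d := by
  rw [dist_eq_sqrt_ham ha hb, dist_eq_sqrt_ham hc hd] at h
  have := (Real.sqrt_le_sqrt_iff (by positivity)).mp h
  exact_mod_cast this

lemma pow_cost_le {x y : EuclideanSpace ℝ (Fin k)} (hx : IsCube x) (hy : IsCube y)
    {M : ℝ} (hM : (ham x y : ℝ) ≤ M) : dist x y ^ k ≤ Real.sqrt M ^ k := by
  rw [dist_eq_sqrt_ham hx hy]
  exact pow_le_pow_left₀ (Real.sqrt_nonneg _) (Real.sqrt_le_sqrt hM) k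

lemma triple_bound {x y z : EuclideanSpace ℝ (Fin k)}
    (hx : IsCube x) (hy : IsCube y) (hz : IsCube z) :
    ham x y + ham y z + ham x z ≤ 2 * k := by
  classical
  unfold ham
  rw [Finset.card_filter, Finset.card_filter, Finset.card_filter,
    ← Finset.sum_add_distrib, ← Finset.sum_add_distrib]
  calc (∑ t : Fin k, ((if x t ≠ y t then 1 else 0) + (if y t ≠ z t then 1 else 0)
          + (if x t ≠ z t then 1 else 0)))
      ≤ ∑ _t : Fin k, 2 := by
        apply Finset.sum_le_sum
        intro t _
        rcases hx t with h1 | h1 <;> rcases hy t with h2 | h2 <;> rcases hz t with h3 | h3 <;>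
          simp [h1, h2, h3]
    _ = 2 * k := by simp [Finset.sum_const, Nat.mul_comm]

noncomputable def toBool {k : ℕ} (x : EuclideanSpace ℝ (Fin k)) : Fin k → Bool :=
  fun t => decide (x t = 1)

lemma toBool_inj {x y : EuclideanSpace ℝ (Fin k)} (hx : IsCube x) (hy : IsCube y)
    (h : toBool x = toBool y) : x = y := by
  ext t
  have := congrFun h t
  unfold toBool at this
  rcases hx t with h1 | h1 <;> rcases hy t with h2 | h2 <;> simp [h1, h2] at this ⊢ <;> norm_num

lemma cube_card_le {S : Finset (EuclideanSpace ℝ (Fin k))} (hS : ∀ x ∈ S, IsCube x) :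
    S.card ≤ 2 ^ k := by
  classical
  have : S.card ≤ (Finset.univ : Finset (Fin k → Bool)).card := by
    apply Finset.card_le_card_of_injOn toBool (fun a _ => Finset.mem_univ _)
    intro a ha b hb hab
    exact toBool_inj (hS a ha) (hS b hb) hab
  simpa [Fintype.card_fun] using this


lemma toBool_ne {x y : EuclideanSpace ℝ (Fin k)} (hx : IsCube x) (hy : IsCube y)
    {t : Fin k} (h : x t ≠ y t) : toBool x t ≠ toBool y t := by
  unfold toBool
  rcases hx t with h1 | h1 <;> rcases hy t with h2 | h2 <;>
    simp [h1, h2] at h ⊢ <;> norm_num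


/-- Packing bound: a set of cube vertices with pairwise Hamming distance ≥ d,
with 2r < d, has size at most 2^k / C(k,r). -/
lemma packing (S : Finset (EuclideanSpace ℝ (Fin k))) (hS : ∀ x ∈ S, IsCube x)
    (d r : ℕ) (hd : ∀ x ∈ S, ∀ y ∈ S, x ≠ y → d ≤ ham x y) (hr : 2 * r < d) :
    S.card * k.choose r ≤ 2 ^ k := by
  classical
  set P : Finset (EuclideanSpace ℝ (Fin k) × Finset (Fin k)) :=
    S ×ˢ (Finset.univ.powersetCard r) with hP
  have hcard : P.card = S.card * k.choose r := by
    rw [hP, Finset.card_product, Finset.card_powersetCard]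
    simp
  set Φ : EuclideanSpace ℝ (Fin k) × Finset (Fin k) → (Fin k → Bool) :=
    fun p t => xor (toBool p.1 t) (decide (t ∈ p.2)) with hΦ
  have hinj : Set.InjOn Φ ↑P := by
    intro p hp q hq hpq
    simp only [hP, Finset.coe_product, Set.mem_prod, Finset.mem_coe,
      Finset.mem_powersetCard] at hp hq
    obtain ⟨hp1, hp2⟩ := hp
    obtain ⟨hq1, hq2⟩ := hq
    -- first : the points are equal
    have hsub : (Finset.univ.filter (fun t => p.1 t ≠ q.1 t)) ⊆ (p.2 \ q.2) ∪ (q.2 \ p.2) := by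
      intro t ht
      rw [Finset.mem_filter] at ht
      have hb : toBool p.1 t ≠ toBool q.1 t := toBool_ne (hS _ hp1) (hS _ hq1) ht.2
      have heq := congrFun hpq t
      simp only [hΦ] at heq
      have : decide (t ∈ p.2) ≠ decide (t ∈ q.2) := by
        intro hdec
        rw [hdec] at heq
        exact hb (by
          rcases Bool.eq_false_or_eq_true (decide (t ∈ q.2)) with h | h <;>
            simp [h] at heq <;> simp [heq])
      rcases Decidable.em (t ∈ p.2) with h1 | h1 <;> rcases Decidable.em (t ∈ q.2) with h2 | h2
      · simp [h1, h2] at this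
      · exact Finset.mem_union_left _ (Finset.mem_sdiff.mpr ⟨h1, h2⟩)
      · exact Finset.mem_union_right _ (Finset.mem_sdiff.mpr ⟨h2, h1⟩)
      · simp [h1, h2] at this
    have hham : ham p.1 q.1 ≤ 2 * r := by
      calc ham p.1 q.1 ≤ ((p.2 \ q.2) ∪ (q.2 \ p.2)).card := Finset.card_le_card hsub
        _ ≤ (p.2 \ q.2).card + (q.2 \ p.2).card := Finset.card_union_le _ _
        _ ≤ p.2.card + q.2.card :=
            Nat.add_le_add (Finset.card_le_card Finset.sdiff_subset)
              (Finset.card_le_card Finset.sdiff_subset)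
        _ = 2 * r := by rw [hp2.2, hq2.2]; ring
    have hpt : p.1 = q.1 := by
      by_contra hne
      exact absurd (hd _ hp1 _ hq1 hne) (by omega)
    -- then : the sets are equal
    have hsets : p.2 = q.2 := by
      ext t
      have heq := congrFun hpq t
      simp only [hΦ, hpt] at heq
      have : decide (t ∈ p.2) = decide (t ∈ q.2) := by
        rcases Bool.eq_false_or_eq_true (toBool q.1 t) with h | h <;> simp [h] at heq <;>
          simp [heq]
      simpa using this
    exact Prod.ext hpt hsets
  have := Finset.card_le_card_of_injOn Φ (fun a _ => Finset.mem_univ _) hinj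
  calc S.card * k.choose r = P.card := hcard.symm
    _ ≤ (Finset.univ : Finset (Fin k → Bool)).card := this
    _ = 2 ^ k := by simp [Finset.card_univ, Fintype.card_fun]


lemma ham_self (x : EuclideanSpace ℝ (Fin k)) : ham x x = 0 := by
  unfold ham; simp

/-- Plotkin-type bound: cube vertices pairwise Hamming distance ≥ d with k < 2d:
at most 2d points. -/
lemma plotkin (S : Finset (EuclideanSpace ℝ (Fin k))) (hS : ∀ x ∈ S, IsCube x)
    (d : ℕ) (hd : ∀ x ∈ S, ∀ y ∈ S, x ≠ y → d ≤ ham x y) (hk : k < 2 * d) :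
    S.card ≤ 2 * d := by
  classical
  rcases Nat.eq_zero_or_pos S.card with h0 | hpos
  · omega
  obtain ⟨m', hm'⟩ : ∃ m', S.card = m' + 1 := ⟨S.card - 1, by omega⟩
  set T : ℕ := ∑ x ∈ S, ∑ y ∈ S, ham x y with hT
  -- lower bound
  have hlow : (m' + 1) * m' * d ≤ T := by
    rw [hT]
    calc (m' + 1) * m' * d = ∑ _x ∈ S, m' * d := by
          rw [Finset.sum_const, hm', smul_eq_mul]; ring
      _ ≤ ∑ x ∈ S, ∑ y ∈ S, ham x y := by
          apply Finset.sum_le_sum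
          intro x hx
          calc m' * d = ∑ _y ∈ S.erase x, d := by
                rw [Finset.sum_const, Finset.card_erase_of_mem hx, hm', smul_eq_mul]; simp
            _ ≤ ∑ y ∈ S.erase x, ham x y := by
                apply Finset.sum_le_sum
                intro y hy
                exact hd x hx y (Finset.mem_of_mem_erase hy)
                  (fun h => (Finset.ne_of_mem_erase hy) h.symm)
            _ ≤ ∑ y ∈ S, ham x y := by
                apply Finset.sum_le_sum_of_subset (Finset.erase_subset _ _)
  -- upper bound
  have hup : 2 * T ≤ k * (m' + 1) ^ 2 := by
    rw [hT]
    have hswap : ∑ x ∈ S, ∑ y ∈ S, ham x y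
        = ∑ t : Fin k, ∑ x ∈ S, ∑ y ∈ S, (if x t ≠ y t then 1 else 0) := by
      unfold ham
      calc ∑ x ∈ S, ∑ y ∈ S, (Finset.univ.filter (fun t => x t ≠ y t)).card
          = ∑ x ∈ S, ∑ y ∈ S, ∑ t : Fin k, (if x t ≠ y t then 1 else 0) := by
            apply Finset.sum_congr rfl; intro x _
            apply Finset.sum_congr rfl; intro y _
            rw [Finset.card_filter]
        _ = ∑ x ∈ S, ∑ t : Fin k, ∑ y ∈ S, (if x t ≠ y t then 1 else 0) := by
            apply Finset.sum_congr rfl; intro x _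
            exact Finset.sum_comm
        _ = ∑ t : Fin k, ∑ x ∈ S, ∑ y ∈ S, (if x t ≠ y t then 1 else 0) :=
            Finset.sum_comm
    rw [hswap, Finset.mul_sum]
    calc ∑ t : Fin k, 2 * (∑ x ∈ S, ∑ y ∈ S, (if x t ≠ y t then 1 else 0))
        ≤ ∑ _t : Fin k, (m' + 1) ^ 2 := by
          apply Finset.sum_le_sum
          intro t _
          set a := (S.filter (fun x => x t = 1)).card with ha
          set b := (S.filter (fun x => ¬ x t = 1)).card with hb
          have hab : a + b = m' + 1 := by
            rw [ha, hb, Finset.card_filter_add_card_filter_not, hm']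
          have hinner : ∀ x ∈ S, ∑ y ∈ S, (if x t ≠ y t then 1 else 0)
              = if x t = 1 then b else a := by
            intro x hx
            rw [← Finset.card_filter]
            by_cases hxt : x t = 1
            · rw [if_pos hxt, hb]
              congr 1
              apply Finset.filter_congr
              intro y hy
              rcases hS y hy t with h2 | h2 <;> simp [hxt, h2]
            · have hx0 : x t = 0 := by rcases hS x hx t with h | h; exact h; exact absurd h hxt
              rw [if_neg hxt, ha]
              congr 1
              apply Finset.filter_congr
              intro y hy
              rcases hS y hy t with h2 | h2 <;> simp [hx0, h2]
          rw [Finset.sum_congr rfl hinner]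
          rw [Finset.sum_ite, Finset.sum_const, Finset.sum_const]
          have h1 : (S.filter (fun x => x t = 1)).card = a := rfl
          have h2 : (S.filter (fun x => ¬ x t = 1)).card = b := rfl
          rw [h1, h2, smul_eq_mul, smul_eq_mul]
          have key : 2 * (a * b + b * a) ≤ (a + b) ^ 2 := by
            zify
            nlinarith [sq_nonneg ((a : ℤ) - b)]
          calc 2 * (a * b + b * a) ≤ (a + b) ^ 2 := key
            _ = (m' + 1) ^ 2 := by rw [hab]
      _ = k * (m' + 1) ^ 2 := by simp [Finset.sum_const]
  -- combine
  have h1 : 2 * ((m' + 1) * m' * d) ≤ k * (m' + 1) ^ 2 := le_trans (by omega) hup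
  have h2 : k * (m' + 1) ^ 2 + (m' + 1) ^ 2 ≤ 2 * d * (m' + 1) ^ 2 := by
    have : k + 1 ≤ 2 * d := hk
    nlinarith
  rw [hm']
  by_contra hcon
  push_neg at hcon
  zify at h1 h2 hcon ⊢
  nlinarith [h1, h2, hcon]





variable {k : ℕ}

noncomputable def step (s : (EuclideanSpace ℝ (Fin k)) × Finset (EuclideanSpace ℝ (Fin k))) :
    (EuclideanSpace ℝ (Fin k)) × Finset (EuclideanSpace ℝ (Fin k)) :=
  if h : s.2.Nonempty then
    let y := Classical.choose (s.2.exists_min_image (fun y => dist s.1 y) h)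
    (y, s.2.erase y)
  else s

noncomputable def greedy (x0 : EuclideanSpace ℝ (Fin k)) (X : Finset (EuclideanSpace ℝ (Fin k))) :
    ℕ → (EuclideanSpace ℝ (Fin k)) × Finset (EuclideanSpace ℝ (Fin k))
  | 0 => (x0, X.erase x0)
  | j + 1 => step (greedy x0 X j)

section Greedy

variable (x0 : EuclideanSpace ℝ (Fin k)) (X : Finset (EuclideanSpace ℝ (Fin k)))

noncomputable def gp (j : ℕ) : EuclideanSpace ℝ (Fin k) := (greedy x0 X j).1
noncomputable def gR (j : ℕ) : Finset (EuclideanSpace ℝ (Fin k)) := (greedy x0 X j).2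

variable {x0 X}

lemma greedy_spec {j : ℕ} (h : (gR x0 X j).Nonempty) :
    gp x0 X (j + 1) ∈ gR x0 X j ∧ gR x0 X (j + 1) = (gR x0 X j).erase (gp x0 X (j + 1)) ∧
      ∀ z ∈ gR x0 X j, dist (gp x0 X j) (gp x0 X (j + 1)) ≤ dist (gp x0 X j) z := by
  have hs : greedy x0 X (j + 1) = step (greedy x0 X j) := rfl
  have h' : (greedy x0 X j).2.Nonempty := h
  have hstep : step (greedy x0 X j) =
      (Classical.choose ((greedy x0 X j).2.exists_min_image (fun y => dist (greedy x0 X j).1 y) h'),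
       (greedy x0 X j).2.erase
         (Classical.choose ((greedy x0 X j).2.exists_min_image (fun y => dist (greedy x0 X j).1 y) h'))) := by
    unfold step
    rw [dif_pos h']
  obtain ⟨hmem, hmin⟩ :=
    Classical.choose_spec ((greedy x0 X j).2.exists_min_image (fun y => dist (greedy x0 X j).1 y) h')
  have hfst : gp x0 X (j + 1) =
      Classical.choose ((greedy x0 X j).2.exists_min_image (fun y => dist (greedy x0 X j).1 y) h') :=
    congrArg Prod.fst (hs.trans hstep)
  constructor
  · show (greedy x0 X (j+1)).1 ∈ _
    rw [show (greedy x0 X (j+1)).1 = gp x0 X (j+1) from rfl, hfst]; exact hmem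
  constructor
  · show (greedy x0 X (j+1)).2 = _
    rw [hs, hstep, ← hfst]
    rfl
  · intro z hz
    show dist (greedy x0 X j).1 (greedy x0 X (j+1)).1 ≤ _
    rw [show (greedy x0 X (j+1)).1 = gp x0 X (j+1) from rfl, hfst]
    exact hmin z hz

lemma gR_succ_subset (j : ℕ) : gR x0 X (j + 1) ⊆ gR x0 X j := by
  by_cases h : (gR x0 X j).Nonempty
  · rw [(greedy_spec h).2.1]; exact Finset.erase_subset _ _
  · have h' : ¬ (greedy x0 X j).2.Nonempty := h
    have heq : gR x0 X (j+1) = gR x0 X j := by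
      show (step (greedy x0 X j)).2 = _
      unfold step
      rw [dif_neg h']
      rfl
    rw [heq]


lemma gR_mono {i j : ℕ} (h : i ≤ j) : gR x0 X j ⊆ gR x0 X i := by
  induction j with
  | zero => simp_all
  | succ j ih =>
    rcases Nat.eq_or_lt_of_le h with h1 | h1
    · rw [h1]
    · exact (gR_succ_subset j).trans (ih (by omega))

lemma gp_not_mem_gR (j : ℕ) : gp x0 X j ∉ gR x0 X j := by
  induction j with
  | zero => exact Finset.notMem_erase _ _
  | succ j ih =>
    by_cases h : (gR x0 X j).Nonempty
    · rw [(greedy_spec h).2.1]; exact Finset.notMem_erase _ _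
    · have h' : ¬ (greedy x0 X j).2.Nonempty := h
      have h2 : greedy x0 X (j+1) = greedy x0 X j := by
        show step (greedy x0 X j) = _
        unfold step
        rw [dif_neg h']
      show (greedy x0 X (j+1)).1 ∉ (greedy x0 X (j+1)).2
      rw [h2]; exact ih

lemma gR_subset_X (hx0 : x0 ∈ X) (j : ℕ) : gR x0 X j ⊆ X := by
  induction j with
  | zero => exact Finset.erase_subset _ _
  | succ j ih => exact (gR_succ_subset j).trans ih

lemma gp_mem_X (hx0 : x0 ∈ X) (j : ℕ) : gp x0 X j ∈ X := by
  induction j with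
  | zero => exact hx0
  | succ j ih =>
    by_cases h : (gR x0 X j).Nonempty
    · exact gR_subset_X hx0 j ((greedy_spec h).1)
    · have h' : ¬ (greedy x0 X j).2.Nonempty := h
      have h2 : greedy x0 X (j+1) = greedy x0 X j := by
        show step (greedy x0 X j) = _
        unfold step
        rw [dif_neg h']
      show (greedy x0 X (j+1)).1 ∈ X
      rw [h2]; exact ih

lemma gR_card (hx0 : x0 ∈ X) {j : ℕ} (hj : j + 1 ≤ X.card) :
    (gR x0 X j).card + (j + 1) = X.card := by
  induction j with
  | zero =>
    have h := Finset.card_erase_of_mem hx0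
    show (X.erase x0).card + 1 = X.card
    omega
  | succ j ih =>
    have hj' : j + 1 ≤ X.card := by omega
    have hcard := ih hj'
    have hne : (gR x0 X j).Nonempty := by
      rw [← Finset.card_pos]; omega
    rw [(greedy_spec hne).2.1, Finset.card_erase_of_mem (greedy_spec hne).1]
    omega

lemma gR_nonempty (hx0 : x0 ∈ X) {j : ℕ} (hj : j + 2 ≤ X.card) : (gR x0 X j).Nonempty := by
  rw [← Finset.card_pos]
  have := gR_card hx0 (j := j) (by omega)
  omega

lemma gp_mem_gR (hx0 : x0 ∈ X) {i j : ℕ} (hij : i < j) (hj : j + 1 ≤ X.card) :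
    gp x0 X j ∈ gR x0 X i := by
  obtain ⟨j', rfl⟩ : ∃ j', j = j' + 1 := ⟨j - 1, by omega⟩
  have hne : (gR x0 X j').Nonempty := gR_nonempty hx0 (by omega)
  exact gR_mono (by omega) (greedy_spec hne).1

lemma gp_inj (hx0 : x0 ∈ X) {i j : ℕ} (hij : i < j) (hj : j + 1 ≤ X.card) :
    gp x0 X i ≠ gp x0 X j := by
  intro h
  have h1 := gp_mem_gR hx0 hij hj
  have h2 := gp_not_mem_gR (x0 := x0) (X := X) i
  rw [h] at h2
  exact h2 h1

lemma gp_min (hx0 : x0 ∈ X) {i j : ℕ} (hij : i < j) (hj : j + 1 ≤ X.card) :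
    dist (gp x0 X i) (gp x0 X (i + 1)) ≤ dist (gp x0 X i) (gp x0 X j) := by
  have hne : (gR x0 X i).Nonempty := gR_nonempty hx0 (by omega)
  exact (greedy_spec hne).2.2 _ (gp_mem_gR hx0 hij hj)

lemma gp_bijOn (hx0 : x0 ∈ X) : Set.BijOn (gp x0 X) (Set.Iio X.card) ↑X := by
  have hinj : Set.InjOn (gp x0 X) (Set.Iio X.card) := by
    intro i hi j hj hij
    rcases lt_trichotomy i j with h | h | h
    · exact absurd hij (gp_inj hx0 h (by simpa using hj))
    · exact h
    · exact absurd hij.symm (gp_inj hx0 h (by simpa using hi))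
  have himg : Finset.image (gp x0 X) (Finset.range X.card) = X := by
    apply Finset.eq_of_subset_of_card_le
    · intro y hy
      obtain ⟨i, hi, rfl⟩ := Finset.mem_image.mp hy
      exact gp_mem_X hx0 i
    · rw [Finset.card_image_of_injOn (by
        intro i hi j hj hij
        exact hinj (by simpa using Finset.mem_range.mp hi) (by simpa using Finset.mem_range.mp hj) hij)]
      simp
  refine ⟨fun i _ => gp_mem_X hx0 i, hinj, ?_⟩
  intro y hy
  rw [← himg] at hy
  obtain ⟨i, hi, rfl⟩ := Finset.mem_image.mp (by exact_mod_cast hy)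
  exact ⟨i, by simpa using Finset.mem_range.mp hi, rfl⟩

end Greedy




/-- `r! · e^r ≤ e · r^(r+1)` for `r ≥ 1`. -/
lemma fact_bound : ∀ r : ℕ, 1 ≤ r →
    (r.factorial : ℝ) * Real.exp 1 ^ r ≤ Real.exp 1 * (r : ℝ) ^ (r + 1) := by
  intro r
  induction r with
  | zero => omega
  | succ r ih =>
    intro _
    rcases Nat.eq_zero_or_pos r with hr | hr
    · subst hr
      simp [Nat.factorial]
    have key : Real.exp 1 * (r : ℝ) ^ (r + 1) ≤ ((r : ℝ) + 1) ^ (r + 1) := by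
      have hrpos : (0 : ℝ) < r := by exact_mod_cast hr
      have h1 : Real.exp (1 / ((r : ℝ) + 1)) ≤ ((r : ℝ) + 1) / r := by
        have h2 : (r : ℝ) / ((r : ℝ) + 1) ≤ Real.exp (-(1 / ((r : ℝ) + 1))) := by
          have := Real.add_one_le_exp (-(1 / ((r : ℝ) + 1)))
          have heq : -(1 / ((r : ℝ) + 1)) + 1 = (r : ℝ) / ((r : ℝ) + 1) := by
            field_simp
            ring
          linarith [heq ▸ this]
        have hpos1 : (0 : ℝ) < (r : ℝ) / ((r : ℝ) + 1) := by positivity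
        have := one_div_le_one_div_of_le hpos1 h2
        rw [Real.exp_neg] at this
        simpa [one_div_div] using this
      have h3 : Real.exp 1 = Real.exp (1 / ((r : ℝ) + 1)) ^ (r + 1) := by
        rw [← Real.exp_nat_mul]
        congr 1
        field_simp
        norm_cast
      calc Real.exp 1 * (r : ℝ) ^ (r + 1)
          ≤ (((r : ℝ) + 1) / r) ^ (r + 1) * (r : ℝ) ^ (r + 1) := by
            apply mul_le_mul_of_nonneg_right _ (by positivity)
            rw [h3]
            exact pow_le_pow_left₀ (Real.exp_nonneg _) h1 _
        _ = ((r : ℝ) + 1) ^ (r + 1) := by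
            rw [div_pow]
            field_simp
    calc ((r + 1).factorial : ℝ) * Real.exp 1 ^ (r + 1)
        = ((r : ℝ) + 1) * ((r.factorial : ℝ) * Real.exp 1 ^ r) * Real.exp 1 := by
          rw [Nat.factorial_succ]
          push_cast
          ring
      _ ≤ ((r : ℝ) + 1) * (Real.exp 1 * (r : ℝ) ^ (r + 1)) * Real.exp 1 := by
          have := ih hr
          have h1 : (0 : ℝ) ≤ (r : ℝ) + 1 := by positivity
          have h2 : (0 : ℝ) ≤ Real.exp 1 := Real.exp_nonneg _
          apply mul_le_mul_of_nonneg_right _ h2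
          exact mul_le_mul_of_nonneg_left this h1
      _ ≤ ((r : ℝ) + 1) * ((r : ℝ) + 1) ^ (r + 1) * Real.exp 1 := by
          apply mul_le_mul_of_nonneg_right _ (Real.exp_nonneg _)
          exact mul_le_mul_of_nonneg_left key (by positivity)
      _ = Real.exp 1 * ((r : ℝ) + 1) ^ (r + 1 + 1) := by ring
      _ = Real.exp 1 * (((r : ℕ) + 1 : ℕ) : ℝ) ^ (r + 1 + 1) := by push_cast; ring

lemma desc_ge (k r : ℕ) : (k - r) ^ r ≤ k.descFactorial r := by
  induction r with
  | zero => simp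
  | succ r ih =>
    rw [Nat.descFactorial_succ]
    calc (k - (r + 1)) ^ (r + 1) = (k - (r+1)) * (k - (r+1)) ^ r := by ring
      _ ≤ (k - r) * (k - r) ^ r := by
          apply Nat.mul_le_mul (by omega)
          exact Nat.pow_le_pow_left (by omega) r
      _ ≤ (k - r) * k.descFactorial r := by
          exact Nat.mul_le_mul_left _ ih

lemma pow_le_choose (k r : ℕ) (h : 16 * r ≤ k) : 15 ^ r ≤ k.choose r := by
  have h1 : 15 ^ r * r.factorial ≤ (k - r) ^ r := by
    calc 15 ^ r * r.factorial ≤ 15 ^ r * r ^ r := by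
          exact Nat.mul_le_mul_left _ (Nat.factorial_le_pow r)
      _ = (15 * r) ^ r := by rw [mul_pow]
      _ ≤ (k - r) ^ r := Nat.pow_le_pow_left (by omega) r
  have h2 := desc_ge k r
  rw [Nat.descFactorial_eq_factorial_mul_choose] at h2
  have := le_trans h1 h2
  have hpos : 0 < r.factorial := Nat.factorial_pos r
  calc 15 ^ r = 15 ^ r * r.factorial / r.factorial := by rw [Nat.mul_div_cancel _ hpos]
    _ ≤ r.factorial * k.choose r / r.factorial := Nat.div_le_div_right (by omega)
    _ = k.choose r := by rw [Nat.mul_div_cancel_left _ hpos]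

/-- Stirling-flavoured binomial lower bound. -/
lemma pow_le_choose' (k r : ℕ) (hr : 1 ≤ r) (h : 8 * r ≤ k) :
    (7 : ℝ) ^ r * Real.exp 1 ^ r ≤ Real.exp 1 * r * (k.choose r : ℝ) := by
  have h1 : ((7 : ℝ) * r) ^ r ≤ ((k - r : ℕ) : ℝ) ^ r := by
    apply pow_le_pow_left₀ (by positivity)
    have : (7 * r : ℕ) ≤ k - r := by omega
    exact_mod_cast this
  have h2 : ((k - r : ℕ) : ℝ) ^ r ≤ (r.factorial : ℝ) * (k.choose r : ℝ) := by
    have := desc_ge k r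
    rw [Nat.descFactorial_eq_factorial_mul_choose] at this
    exact_mod_cast this
  have hf := fact_bound r hr
  -- 7^r e^r * (r! e^r)  ≤ (7r)^r e^r * (e r^{r+1}) ... rearrange
  have hrpos : (0 : ℝ) < r := by exact_mod_cast hr
  have epos : (0 : ℝ) < Real.exp 1 := Real.exp_pos 1
  -- main chain: 7^r * e^r * r! ≤ 7^r * e * r^{r+1} = (7r)^r * (e * r) ≤ r! * choose * e * r
  have key : (7 : ℝ) ^ r * Real.exp 1 ^ r * (r.factorial : ℝ)
      ≤ (r.factorial : ℝ) * (k.choose r) * (Real.exp 1 * r) := by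
    calc (7 : ℝ) ^ r * Real.exp 1 ^ r * (r.factorial : ℝ)
        = (7 : ℝ) ^ r * ((r.factorial : ℝ) * Real.exp 1 ^ r) := by ring
      _ ≤ (7 : ℝ) ^ r * (Real.exp 1 * (r : ℝ) ^ (r + 1)) := by
          exact mul_le_mul_of_nonneg_left hf (by positivity)
      _ = ((7 : ℝ) * r) ^ r * (Real.exp 1 * r) := by
          rw [mul_pow]
          ring
      _ ≤ ((k - r : ℕ) : ℝ) ^ r * (Real.exp 1 * r) := by
          exact mul_le_mul_of_nonneg_right h1 (by positivity)
      _ ≤ (r.factorial : ℝ) * (k.choose r) * (Real.exp 1 * r) := by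
          exact mul_le_mul_of_nonneg_right h2 (by positivity)
  have hfpos : (0 : ℝ) < (r.factorial : ℝ) := by exact_mod_cast Nat.factorial_pos r
  calc (7 : ℝ) ^ r * Real.exp 1 ^ r
      = (7 : ℝ) ^ r * Real.exp 1 ^ r * (r.factorial : ℝ) / (r.factorial : ℝ) := by
        field_simp
    _ ≤ (r.factorial : ℝ) * (k.choose r) * (Real.exp 1 * r) / (r.factorial : ℝ) := by
        gcongr
    _ = Real.exp 1 * r * (k.choose r : ℝ) := by
        field_simp

lemma pow_km1_le (k : ℕ) (hk : 1 ≤ k) :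
    (((k - 1 : ℕ) : ℝ)) ^ k ≤ Real.exp (-1) * (k : ℝ) ^ k := by
  have hkpos : (0 : ℝ) < k := by exact_mod_cast hk
  have h1 : ((k - 1 : ℕ) : ℝ) = ((k : ℝ) - 1) := by
    have : (1 : ℕ) ≤ k := hk
    push_cast [this]
    ring
  have h2 : ((k : ℝ) - 1) / k ≤ Real.exp (-(1 / (k : ℝ))) := by
    have := Real.add_one_le_exp (-(1 / (k : ℝ)))
    have heq : -(1 / (k : ℝ)) + 1 = ((k : ℝ) - 1) / k := by
      field_simp
      ring
    linarith [heq ▸ this]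
  have h3 : (((k : ℝ) - 1) / k) ^ k ≤ Real.exp (-1) := by
    calc (((k : ℝ) - 1) / k) ^ k ≤ Real.exp (-(1 / (k : ℝ))) ^ k := by
          apply pow_le_pow_left₀ _ h2
          have : (1:ℝ) ≤ (k:ℝ) := by exact_mod_cast hk
          apply div_nonneg (by linarith) (by positivity)
      _ = Real.exp ((k : ℝ) * (-(1 / (k : ℝ)))) := by rw [Real.exp_nat_mul]
      _ = Real.exp (-1) := by
          congr 1
          field_simp
  calc ((k - 1 : ℕ) : ℝ) ^ k = (((k : ℝ) - 1) / k) ^ k * (k : ℝ) ^ k := by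
        rw [h1, div_pow]
        field_simp
    _ ≤ Real.exp (-1) * (k : ℝ) ^ k := by
        exact mul_le_mul_of_nonneg_right h3 (by positivity)




noncomputable def s15 : ℝ := √(√(√(√15)))
noncomputable def s7e : ℝ := √(√(√(7 * Real.exp 1)))

lemma s15_nonneg : 0 ≤ s15 := Real.sqrt_nonneg _
lemma s7e_nonneg : 0 ≤ s7e := Real.sqrt_nonneg _

lemma s15_pow : s15 ^ 16 = 15 := by
  unfold s15
  have h : ∀ y : ℝ, 0 ≤ y → Real.sqrt y ^ 2 = y := fun y hy => Real.sq_sqrt hy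
  calc (√(√(√(√15)))) ^ 16 = ((((√(√(√(√15)))) ^ 2) ^ 2) ^ 2) ^ 2 := by ring
    _ = 15 := by
      rw [h _ (Real.sqrt_nonneg _), h _ (Real.sqrt_nonneg _), h _ (Real.sqrt_nonneg _),
        h _ (by norm_num)]

lemma s7e_pow : s7e ^ 8 = 7 * Real.exp 1 := by
  unfold s7e
  have h : ∀ y : ℝ, 0 ≤ y → Real.sqrt y ^ 2 = y := fun y hy => Real.sq_sqrt hy
  calc (√(√(√(7 * Real.exp 1)))) ^ 8 = (((√(√(√(7 * Real.exp 1)))) ^ 2) ^ 2) ^ 2 := by ring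
    _ = 7 * Real.exp 1 := by
      rw [h _ (Real.sqrt_nonneg _), h _ (Real.sqrt_nonneg _),
        h _ (by positivity)]

lemma s15_one_le : 1 ≤ s15 := by
  by_contra hc
  push_neg at hc
  have := pow_le_one₀ s15_nonneg hc.le (n := 16)
  rw [s15_pow] at this
  norm_num at this

lemma s7e_one_le : 1 ≤ s7e := by
  by_contra hc
  push_neg at hc
  have := pow_le_one₀ s7e_nonneg hc.le (n := 8)
  rw [s7e_pow] at this
  have := Real.exp_pos 1
  nlinarith [Real.add_one_le_exp (1:ℝ)]

lemma s15_pos : 0 < s15 := lt_of_lt_of_le one_pos s15_one_le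
lemma s7e_pos : 0 < s7e := lt_of_lt_of_le one_pos s7e_one_le

lemma pow_div_bound15 (k : ℕ) : s15 ^ k ≤ 15 * 15 ^ (k / 16) := by
  have h1 : k ≤ 16 * (k / 16) + 16 := by omega
  calc s15 ^ k ≤ s15 ^ (16 * (k / 16) + 16) := pow_le_pow_right₀ s15_one_le h1
    _ = (s15 ^ 16) ^ (k / 16) * s15 ^ 16 := by rw [pow_add, pow_mul]
    _ = 15 * 15 ^ (k / 16) := by rw [s15_pow]; ring

lemma pow_div_bound7e (k : ℕ) : s7e ^ k ≤ (7 * Real.exp 1) * (7 * Real.exp 1) ^ (k / 8) := by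
  have h1 : k ≤ 8 * (k / 8) + 8 := by omega
  calc s7e ^ k ≤ s7e ^ (8 * (k / 8) + 8) := pow_le_pow_right₀ s7e_one_le h1
    _ = (s7e ^ 8) ^ (k / 8) * s7e ^ 8 := by rw [pow_add, pow_mul]
    _ = (7 * Real.exp 1) * (7 * Real.exp 1) ^ (k / 8) := by rw [s7e_pow]; ring

lemma sqrt2_lt_sqrt3 : √2 < √3 := Real.sqrt_lt_sqrt (by norm_num) (by norm_num)

lemma c0_mem : 0 ≤ 2 / √5 ∧ 2 / √5 < 1 := by
  constructor
  · positivity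
  · rw [div_lt_one (by positivity)]
    have : (2 : ℝ) = √4 := by
      rw [show (4:ℝ) = 2^2 by norm_num, Real.sqrt_sq (by norm_num)]
    rw [this]
    exact Real.sqrt_lt_sqrt (by norm_num) (by norm_num)

lemma c1_mem : 0 ≤ 2 / (√3 * s15) ∧ 2 / (√3 * s15) < 1 := by
  have hpos : 0 < √3 * s15 := mul_pos (by positivity) s15_pos
  constructor
  · exact div_nonneg (by norm_num) hpos.le
  · rw [div_lt_one hpos]
    have hpow : (2 : ℝ) ^ 16 < (√3 * s15) ^ 16 := by
      rw [mul_pow, show (√3:ℝ)^16 = ((√3)^2)^8 by ring, Real.sq_sqrt (by norm_num : (0:ℝ) ≤ 3),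
        s15_pow]
      norm_num
    exact lt_of_pow_lt_pow_left₀ 16 hpos.le hpow

lemma c2_mem : 0 ≤ √2 / s7e ∧ √2 / s7e < 1 := by
  constructor
  · exact div_nonneg (Real.sqrt_nonneg _) s7e_nonneg
  · rw [div_lt_one s7e_pos]
    have hpow : (√2 : ℝ) ^ 8 < s7e ^ 8 := by
      rw [show (√2:ℝ)^8 = ((√2)^2)^4 by ring, Real.sq_sqrt (by norm_num : (0:ℝ) ≤ 2), s7e_pow]
      have he : (2.7182818283 : ℝ) < Real.exp 1 := Real.exp_one_gt_d9
      norm_num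
      nlinarith
    exact lt_of_pow_lt_pow_left₀ 8 s7e_nonneg hpow

lemma c3_mem : 0 ≤ √2 / √3 ∧ √2 / √3 < 1 := by
  constructor
  · positivity
  · rw [div_lt_one (by positivity)]
    exact sqrt2_lt_sqrt3

noncomputable def epsf (k : ℕ) : ℝ :=
  (2 / √5) ^ k + 15 * (2 / (√3 * s15)) ^ k
    + 7 * Real.exp 1 ^ 2 * ((k : ℝ) * (√2 / s7e) ^ k) + ((k : ℝ) + 2) * (√2 / √3) ^ k

lemma epsf_tendsto : Tendsto epsf atTop (nhds 0) := by
  have t1 : Tendsto (fun k : ℕ => (2 / √5) ^ k) atTop (nhds 0) :=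
    tendsto_pow_atTop_nhds_zero_of_lt_one c0_mem.1 c0_mem.2
  have t2 : Tendsto (fun k : ℕ => 15 * (2 / (√3 * s15)) ^ k) atTop (nhds 0) := by
    simpa only [mul_zero] using
      (tendsto_pow_atTop_nhds_zero_of_lt_one c1_mem.1 c1_mem.2).const_mul (15:ℝ)
  have t3 : Tendsto (fun k : ℕ => 7 * Real.exp 1 ^ 2 * ((k : ℝ) * (√2 / s7e) ^ k)) atTop (nhds 0) := by
    simpa only [mul_zero] using
      (tendsto_self_mul_const_pow_of_lt_one c2_mem.1 c2_mem.2).const_mul (7 * Real.exp 1 ^ 2)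
  have t4 : Tendsto (fun k : ℕ => ((k : ℝ) + 2) * (√2 / √3) ^ k) atTop (nhds 0) := by
    have ha : Tendsto (fun k : ℕ => (k : ℝ) * (√2 / √3) ^ k) atTop (nhds 0) :=
      tendsto_self_mul_const_pow_of_lt_one c3_mem.1 c3_mem.2
    have hb : Tendsto (fun k : ℕ => 2 * (√2 / √3) ^ k) atTop (nhds 0) := by
      simpa only [mul_zero] using
        (tendsto_pow_atTop_nhds_zero_of_lt_one c3_mem.1 c3_mem.2).const_mul (2:ℝ)
    have := ha.add hb
    simp only [add_zero] at this
    apply this.congr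
    intro k
    ring
  have := ((t1.add t2).add t3).add t4
  unfold epsf
  simpa only [add_zero] using this

lemma eventually_good : ∀ᶠ k in atTop, epsf k ≤ 1 - Real.exp (-(1/2)) ∧ 8 ≤ k := by
  have hpos : (0:ℝ) < 1 - Real.exp (-(1/2)) := by
    have : Real.exp (-(1/2)) < Real.exp 0 := Real.exp_lt_exp.mpr (by norm_num)
    simpa using this
  have h1 : ∀ᶠ k in atTop, epsf k ≤ 1 - Real.exp (-(1/2)) :=
    epsf_tendsto.eventually (ge_mem_nhds hpos)

  exact h1.and (eventually_ge_atTop 8)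



section Helpers

variable {k : ℕ} {x0 : EuclideanSpace ℝ (Fin k)} {X : Finset (EuclideanSpace ℝ (Fin k))}

lemma ham_star (hcube : ∀ x ∈ X, IsCube x) (hx0 : x0 ∈ X) {m : ℕ} (hm : m + 1 = X.card)
    {i j : ℕ} (hij : i < j) (hj : j ≤ m) :
    ham (gp x0 X i) (gp x0 X (i+1)) ≤ ham (gp x0 X i) (gp x0 X j) := by
  have h := gp_min hx0 hij (by omega)
  exact ham_le_of_dist_le (hcube _ (gp_mem_X hx0 i)) (hcube _ (gp_mem_X hx0 (i+1)))
    (hcube _ (gp_mem_X hx0 i)) (hcube _ (gp_mem_X hx0 j)) h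

lemma band_cost (hcube : ∀ x ∈ X, IsCube x) (hx0 : x0 ∈ X)
    (B : Finset ℕ) {Mr : ℝ}
    (hcost : ∀ i ∈ B, (ham (gp x0 X i) (gp x0 X (i+1)) : ℝ) ≤ Mr) :
    ∑ i ∈ B, dist (gp x0 X i) (gp x0 X (i+1)) ^ k ≤ (B.card : ℝ) * Real.sqrt Mr ^ k := by
  have h := Finset.sum_le_card_nsmul B _ (Real.sqrt Mr ^ k) (fun i hi =>
    pow_cost_le (hcube _ (gp_mem_X hx0 i)) (hcube _ (gp_mem_X hx0 (i+1))) (hcost i hi))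
  simpa [nsmul_eq_mul] using h

lemma band_set (hcube : ∀ x ∈ X, IsCube x) (hx0 : x0 ∈ X) {m : ℕ} (hm : m + 1 = X.card)
    (B : Finset ℕ) (hB : B ⊆ Finset.range m) (d : ℕ)
    (hd : ∀ i ∈ B, d ≤ ham (gp x0 X i) (gp x0 X (i+1))) :
    ∃ S : Finset (EuclideanSpace ℝ (Fin k)), S.card = B.card ∧ (∀ x ∈ S, IsCube x) ∧
      (∀ x ∈ S, ∀ y ∈ S, x ≠ y → d ≤ ham x y) := by
  classical
  have hrange : ∀ i ∈ B, i < m := fun i hi => Finset.mem_range.mp (hB hi)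
  have hinj : Set.InjOn (gp x0 X) ↑B := by
    intro i hi j hj hij
    by_contra hne
    rcases Nat.lt_or_ge i j with h | h
    · exact gp_inj hx0 h (by have := hrange j hj; omega) hij
    · have h' : j < i := by omega
      exact gp_inj hx0 h' (by have := hrange i hi; omega) hij.symm
  refine ⟨B.image (gp x0 X), Finset.card_image_of_injOn hinj, ?_, ?_⟩
  · intro x hx
    obtain ⟨i, _, rfl⟩ := Finset.mem_image.mp hx
    exact hcube _ (gp_mem_X hx0 i)
  · intro x hx y hy hxy
    obtain ⟨i, hi, rfl⟩ := Finset.mem_image.mp hx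
    obtain ⟨j, hj, rfl⟩ := Finset.mem_image.mp hy
    have hij : i ≠ j := fun h => hxy (by rw [h])
    rcases Nat.lt_or_ge i j with h | h
    · exact le_trans (hd i hi) (ham_star hcube hx0 hm h (by have := hrange j hj; omega))
    · have h' : j < i := by omega
      rw [ham_symm]
      exact le_trans (hd j hj) (ham_star hcube hx0 hm h' (by have := hrange i hi; omega))

end Helpers

lemma sqrt_pow' (x : ℝ) (hx : 0 ≤ x) (n : ℕ) : Real.sqrt (x ^ n) = Real.sqrt x ^ n := by
  have h : x ^ n = (Real.sqrt x ^ n) ^ 2 := by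
    rw [← pow_mul, mul_comm, pow_mul, Real.sq_sqrt hx]
  rw [h, Real.sqrt_sq (pow_nonneg (Real.sqrt_nonneg x) n)]

end TSP

set_option maxHeartbeats 2000000 in
/-- There exists `k₀` such that for all `k ≥ k₀`: for every subset `X` of the cube vertices
`{0,1}^k` with `|X| ≥ 2`, there is a Hamiltonian cycle through `X` of unscaled cost at most
`2·k^{k/2}`, i.e. scaled cost at most `2^{1/k}·√k`. -/
theorem stmt_2 :
    ∃ k0 : ℕ, ∀ k : ℕ, k0 ≤ k →
      ∀ X : Finset (EuclideanSpace ℝ (Fin k)),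
        (∀ x ∈ X, ∀ i, x i = 0 ∨ x i = 1) → 2 ≤ X.card →
        ∃ f : ℕ → EuclideanSpace ℝ (Fin k),
          Set.BijOn f (Set.Iio X.card) ↑X ∧
          ∑ i ∈ Finset.range X.card, dist (f i) (f ((i + 1) % X.card)) ^ k ≤
            2 * Real.sqrt k ^ k := by
  classical
  obtain ⟨k0, hk0⟩ := Filter.eventually_atTop.mp TSP.eventually_good
  refine ⟨k0, fun k hk X hcube' hcard => ?_⟩
  obtain ⟨heps, hk8⟩ := hk0 k hk
  have hcube : ∀ x ∈ X, TSP.IsCube x := hcube'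
  have hXne : X.Nonempty := Finset.card_pos.mp (by omega)
  obtain ⟨x0, hx0⟩ := hXne
  set p : ℕ → EuclideanSpace ℝ (Fin k) := TSP.gp x0 X with hpdef
  refine ⟨p, TSP.gp_bijOn hx0, ?_⟩
  have hcubeP : ∀ j, TSP.IsCube (p j) := fun j => hcube _ (TSP.gp_mem_X hx0 j)
  have hknat : (0:ℝ) ≤ (k:ℝ) := by positivity
  have hedge : ∀ i j : ℕ, dist (p i) (p j) ^ k ≤ Real.sqrt (k:ℝ) ^ k := fun i j =>
    TSP.pow_cost_le (hcubeP i) (hcubeP j) (by exact_mod_cast TSP.ham_le (p i) (p j))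
  have hsqnn : (0:ℝ) ≤ Real.sqrt (k:ℝ) ^ k := by positivity
  by_cases hn2 : X.card = 2
  · rw [hn2]
    rw [show (2:ℕ) = 1 + 1 from rfl, Finset.sum_range_succ, Finset.sum_range_succ,
      Finset.sum_range_zero]
    norm_num
    calc dist (p 0) (p 1) ^ k + dist (p 1) (p 0) ^ k
        ≤ Real.sqrt (k:ℝ) ^ k + Real.sqrt (k:ℝ) ^ k := add_le_add (hedge 0 1) (hedge 1 0)
      _ = 2 * Real.sqrt (k:ℝ) ^ k := by ring
  · have hn3 : 3 ≤ X.card := by omega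
    obtain ⟨m, hm⟩ : ∃ m, m + 1 = X.card := ⟨X.card - 1, by omega⟩
    have hm2 : 2 ≤ m := by omega
    set D : ℕ → ℕ := fun i => TSP.ham (p i) (p (i+1)) with hDdef
    have hDeq : ∀ i, D i = TSP.ham (p i) (p (i+1)) := fun i => rfl
    -- split off the closing edge
    have hsum0 : ∑ i ∈ Finset.range X.card, dist (p i) (p ((i + 1) % X.card)) ^ k
        = (∑ i ∈ Finset.range m, dist (p i) (p (i+1)) ^ k) + dist (p m) (p 0) ^ k := by
      rw [← hm, Finset.sum_range_succ]
      congr 1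
      · apply Finset.sum_congr rfl
        intro i hi
        have hi' : i + 1 < m + 1 := by
          have := Finset.mem_range.mp hi
          omega
        rw [Nat.mod_eq_of_lt hi']
      · rw [Nat.mod_self]
    rw [hsum0]
    set F : ℕ → ℝ := fun i => dist (p i) (p (i+1)) ^ k with hFdef
    -- bands
    set B0 := (Finset.range m).filter (fun i => 5 * D i ≤ k) with hB0
    set C0 := (Finset.range m).filter (fun i => ¬ 5 * D i ≤ k) with hC0
    set B1 := C0.filter (fun i => 3 * D i ≤ k) with hB1
    set C1 := C0.filter (fun i => ¬ 3 * D i ≤ k) with hC1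
    set B2 := C1.filter (fun i => 2 * D i ≤ k) with hB2
    set C2 := C1.filter (fun i => ¬ 2 * D i ≤ k) with hC2
    set B3 := C2.filter (fun i => 3 * D i ≤ 2 * k) with hB3
    set B4 := C2.filter (fun i => ¬ 3 * D i ≤ 2 * k) with hB4
    have hsplit : ∑ i ∈ Finset.range m, F i
        = ∑ i ∈ B0, F i + (∑ i ∈ B1, F i + (∑ i ∈ B2, F i + (∑ i ∈ B3, F i + ∑ i ∈ B4, F i))) := by
      rw [← Finset.sum_filter_add_sum_filter_not (Finset.range m) (fun i => 5 * D i ≤ k) F]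
      congr 1
      rw [← Finset.sum_filter_add_sum_filter_not C0 (fun i => 3 * D i ≤ k) F]
      congr 1
      rw [← Finset.sum_filter_add_sum_filter_not C1 (fun i => 2 * D i ≤ k) F]
      congr 1
      rw [← Finset.sum_filter_add_sum_filter_not C2 (fun i => 3 * D i ≤ 2 * k) F]
    -- membership facts
    have hmemB1 : ∀ i ∈ B1, i < m ∧ k < 5 * D i ∧ 3 * D i ≤ k := by
      intro i hi
      rw [hB1, Finset.mem_filter, hC0, Finset.mem_filter, Finset.mem_range] at hi
      exact ⟨hi.1.1, by omega, hi.2⟩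
    have hmemB2 : ∀ i ∈ B2, i < m ∧ k < 3 * D i ∧ 2 * D i ≤ k := by
      intro i hi
      rw [hB2, Finset.mem_filter, hC1, Finset.mem_filter, hC0, Finset.mem_filter,
        Finset.mem_range] at hi
      exact ⟨hi.1.1.1, by omega, hi.2⟩
    have hmemB3 : ∀ i ∈ B3, i < m ∧ k < 2 * D i ∧ 3 * D i ≤ 2 * k := by
      intro i hi
      rw [hB3, Finset.mem_filter, hC2, Finset.mem_filter, hC1, Finset.mem_filter, hC0,
        Finset.mem_filter, Finset.mem_range] at hi
      exact ⟨hi.1.1.1.1, by omega, hi.2⟩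
    have hmemB4 : ∀ i ∈ B4, i < m ∧ 2 * k < 3 * D i := by
      intro i hi
      rw [hB4, Finset.mem_filter, hC2, Finset.mem_filter, hC1, Finset.mem_filter, hC0,
        Finset.mem_filter, Finset.mem_range] at hi
      exact ⟨hi.1.1.1.1, by omega⟩
    have hsubB1 : B1 ⊆ Finset.range m := by
      rw [hB1, hC0]; exact (Finset.filter_subset _ _).trans (Finset.filter_subset _ _)
    have hsubB2 : B2 ⊆ Finset.range m := by
      rw [hB2, hC1, hC0]
      exact ((Finset.filter_subset _ _).trans (Finset.filter_subset _ _)).trans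
        (Finset.filter_subset _ _)
    have hsubB3 : B3 ⊆ Finset.range m := by
      rw [hB3, hC2, hC1, hC0]
      exact (((Finset.filter_subset _ _).trans (Finset.filter_subset _ _)).trans
        (Finset.filter_subset _ _)).trans (Finset.filter_subset _ _)
    -- cardinality of X at most 2^k
    have hX2k : X.card ≤ 2 ^ k := TSP.cube_card_le hcube
    -- ==== E0 ====
    have hE0 : ∑ i ∈ B0, F i ≤ (2 / Real.sqrt 5) ^ k * Real.sqrt (k:ℝ) ^ k := by
      have hcost : ∀ i ∈ B0, (TSP.ham (p i) (p (i+1)) : ℝ) ≤ (k:ℝ) / 5 := by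
        intro i hi
        rw [hB0, Finset.mem_filter] at hi
        have h5 : 5 * D i ≤ k := hi.2
        have hcast : ((5 * D i : ℕ) : ℝ) ≤ (k:ℝ) := Nat.cast_le.mpr h5
        push_cast at hcast
        rw [← hDeq i, le_div_iff₀ (by norm_num : (0:ℝ) < 5)]
        linarith
      have hc := TSP.band_cost hcube hx0 B0 hcost
      have hcard0 : (B0.card : ℝ) ≤ 2 ^ k := by
        have h1 : B0.card ≤ m := by
          rw [hB0]
          calc ((Finset.range m).filter _).card ≤ (Finset.range m).card :=
                Finset.card_filter_le _ _
            _ = m := Finset.card_range m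
        have h2 : B0.card ≤ 2 ^ k := by omega
        exact_mod_cast h2
      calc ∑ i ∈ B0, F i ≤ (B0.card : ℝ) * Real.sqrt ((k:ℝ)/5) ^ k := hc
        _ ≤ 2 ^ k * Real.sqrt ((k:ℝ)/5) ^ k := by
            exact mul_le_mul_of_nonneg_right hcard0 (by positivity)
        _ = (2 / Real.sqrt 5) ^ k * Real.sqrt (k:ℝ) ^ k := by
            rw [Real.sqrt_div hknat, div_pow, div_pow]
            ring
    -- ==== E1 ====
    have hE1 : ∑ i ∈ B1, F i ≤ 15 * (2 / (Real.sqrt 3 * TSP.s15)) ^ k * Real.sqrt (k:ℝ) ^ k := by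
      have hd1 : ∀ i ∈ B1, k/5 + 1 ≤ TSP.ham (p i) (p (i+1)) := by
        intro i hi
        have := hmemB1 i hi
        rw [← hDeq i]
        omega
      obtain ⟨S1, hS1card, hS1cube, hS1pair⟩ := TSP.band_set hcube hx0 hm B1 hsubB1 (k/5+1) hd1
      have hpack1 : S1.card * Nat.choose k (k/16) ≤ 2 ^ k :=
        TSP.packing S1 hS1cube (k/5+1) (k/16) hS1pair (by omega)
      have hchoose1 : 15 ^ (k/16) ≤ Nat.choose k (k/16) := TSP.pow_le_choose k (k/16) (by omega)
      have h1 : B1.card * 15 ^ (k/16) ≤ 2 ^ k := by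
        calc B1.card * 15 ^ (k/16) = S1.card * 15 ^ (k/16) := by rw [hS1card]
          _ ≤ S1.card * Nat.choose k (k/16) := Nat.mul_le_mul_left _ hchoose1
          _ ≤ 2 ^ k := hpack1
      have h2 : (B1.card : ℝ) * 15 ^ (k/16) ≤ 2 ^ k := by exact_mod_cast h1
      have hcount1 : (B1.card : ℝ) * TSP.s15 ^ k ≤ 15 * 2 ^ k := by
        calc (B1.card:ℝ) * TSP.s15 ^ k ≤ (B1.card:ℝ) * (15 * 15 ^ (k/16)) :=
              mul_le_mul_of_nonneg_left (TSP.pow_div_bound15 k) (Nat.cast_nonneg _)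
          _ = 15 * ((B1.card:ℝ) * 15 ^ (k/16)) := by ring
          _ ≤ 15 * 2 ^ k := by linarith
      have hcardb : (B1.card:ℝ) ≤ 15 * 2 ^ k / TSP.s15 ^ k := by
        rw [le_div_iff₀ (pow_pos TSP.s15_pos k)]
        exact hcount1
      have hcost : ∀ i ∈ B1, (TSP.ham (p i) (p (i+1)) : ℝ) ≤ (k:ℝ) / 3 := by
        intro i hi
        have h3 := (hmemB1 i hi).2.2
        have hcast : ((3 * D i : ℕ) : ℝ) ≤ (k:ℝ) := Nat.cast_le.mpr h3
        push_cast at hcast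
        rw [← hDeq i, le_div_iff₀ (by norm_num : (0:ℝ) < 3)]
        linarith
      have hc := TSP.band_cost hcube hx0 B1 hcost
      have hs3 : (0:ℝ) < Real.sqrt 3 := Real.sqrt_pos.mpr (by norm_num)
      calc ∑ i ∈ B1, F i ≤ (B1.card : ℝ) * Real.sqrt ((k:ℝ)/3) ^ k := hc
        _ ≤ (15 * 2 ^ k / TSP.s15 ^ k) * Real.sqrt ((k:ℝ)/3) ^ k :=
            mul_le_mul_of_nonneg_right hcardb (by positivity)
        _ = 15 * (2 / (Real.sqrt 3 * TSP.s15)) ^ k * Real.sqrt (k:ℝ) ^ k := by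
            rw [Real.sqrt_div hknat, div_pow, div_pow, mul_pow]
            field_simp
    -- ==== E2 ====
    have hE2 : ∑ i ∈ B2, F i
        ≤ 7 * Real.exp 1 ^ 2 * ((k:ℝ) * (Real.sqrt 2 / TSP.s7e) ^ k) * Real.sqrt (k:ℝ) ^ k := by
      have hd2 : ∀ i ∈ B2, k/3 + 1 ≤ TSP.ham (p i) (p (i+1)) := by
        intro i hi
        have := hmemB2 i hi
        rw [← hDeq i]
        omega
      obtain ⟨S2, hS2card, hS2cube, hS2pair⟩ := TSP.band_set hcube hx0 hm B2 hsubB2 (k/3+1) hd2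
      have hpack2 : S2.card * Nat.choose k (k/8) ≤ 2 ^ k :=
        TSP.packing S2 hS2cube (k/3+1) (k/8) hS2pair (by omega)
      have hstir : (7:ℝ) ^ (k/8) * Real.exp 1 ^ (k/8)
          ≤ Real.exp 1 * (k/8 : ℕ) * (Nat.choose k (k/8) : ℝ) :=
        TSP.pow_le_choose' k (k/8) (by omega) (by omega)
      have hpack2' : (B2.card : ℝ) * (Nat.choose k (k/8) : ℝ) ≤ 2 ^ k := by
        rw [hS2card] at hpack2
        exact_mod_cast hpack2
      have hchle : (0:ℝ) ≤ (Nat.choose k (k/8) : ℝ) := by positivity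
      have hrk : ((k/8 : ℕ) : ℝ) ≤ (k:ℝ) := Nat.cast_le.mpr (Nat.div_le_self k 8)
      have hrnn : (0:ℝ) ≤ ((k/8 : ℕ) : ℝ) := by positivity
      have hA : (B2.card:ℝ) * ((7 * Real.exp 1) ^ (k/8)) ≤ Real.exp 1 * (k:ℝ) * 2 ^ k := by
        calc (B2.card:ℝ) * ((7 * Real.exp 1) ^ (k/8))
            = (B2.card:ℝ) * ((7:ℝ) ^ (k/8) * Real.exp 1 ^ (k/8)) := by rw [mul_pow]
          _ ≤ (B2.card:ℝ) * (Real.exp 1 * (k/8 : ℕ) * (Nat.choose k (k/8) : ℝ)) :=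
              mul_le_mul_of_nonneg_left hstir (by positivity)
          _ = Real.exp 1 * ((k/8 : ℕ) : ℝ) * ((B2.card:ℝ) * (Nat.choose k (k/8) : ℝ)) := by
              ring
          _ ≤ Real.exp 1 * ((k/8 : ℕ) : ℝ) * 2 ^ k :=
              mul_le_mul_of_nonneg_left hpack2' (by positivity)
          _ ≤ Real.exp 1 * (k:ℝ) * 2 ^ k := by
              have h2nn : (0:ℝ) ≤ (2:ℝ)^k := by positivity
              have := mul_le_mul_of_nonneg_right hrk h2nn
              have := mul_le_mul_of_nonneg_left this (Real.exp_nonneg (1:ℝ))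
              calc Real.exp 1 * ((k/8 : ℕ) : ℝ) * 2 ^ k
                  = Real.exp 1 * (((k/8 : ℕ) : ℝ) * 2 ^ k) := by ring
                _ ≤ Real.exp 1 * ((k:ℝ) * 2 ^ k) := this
                _ = Real.exp 1 * (k:ℝ) * 2 ^ k := by ring
      have h7e1 : (1:ℝ) ≤ 7 * Real.exp 1 := by nlinarith [Real.add_one_le_exp (1:ℝ)]
      have hcount2 : (B2.card:ℝ) * TSP.s7e ^ k
          ≤ 7 * Real.exp 1 ^ 2 * (k:ℝ) * 2 ^ k := by
        calc (B2.card:ℝ) * TSP.s7e ^ k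
            ≤ (B2.card:ℝ) * ((7 * Real.exp 1) * (7 * Real.exp 1) ^ (k/8)) :=
              mul_le_mul_of_nonneg_left (TSP.pow_div_bound7e k) (Nat.cast_nonneg _)
          _ = (7 * Real.exp 1) * ((B2.card:ℝ) * (7 * Real.exp 1) ^ (k/8)) := by ring
          _ ≤ (7 * Real.exp 1) * (Real.exp 1 * (k:ℝ) * 2 ^ k) :=
              mul_le_mul_of_nonneg_left hA (by positivity)
          _ = 7 * Real.exp 1 ^ 2 * (k:ℝ) * 2 ^ k := by ring
      have hcardb : (B2.card:ℝ) ≤ 7 * Real.exp 1 ^ 2 * (k:ℝ) * 2 ^ k / TSP.s7e ^ k := by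
        rw [le_div_iff₀ (pow_pos TSP.s7e_pos k)]
        exact hcount2
      have hcost : ∀ i ∈ B2, (TSP.ham (p i) (p (i+1)) : ℝ) ≤ (k:ℝ) / 2 := by
        intro i hi
        have h3 := (hmemB2 i hi).2.2
        have hcast : ((2 * D i : ℕ) : ℝ) ≤ (k:ℝ) := Nat.cast_le.mpr h3
        push_cast at hcast
        rw [← hDeq i, le_div_iff₀ (by norm_num : (0:ℝ) < 2)]
        linarith
      have hc := TSP.band_cost hcube hx0 B2 hcost
      have h2k : ((2:ℝ)) ^ k = Real.sqrt 2 ^ k * Real.sqrt 2 ^ k := by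
        rw [← mul_pow, Real.mul_self_sqrt (by norm_num : (0:ℝ) ≤ 2)]
      have hs2 : (0:ℝ) < Real.sqrt 2 := Real.sqrt_pos.mpr (by norm_num)
      calc ∑ i ∈ B2, F i ≤ (B2.card : ℝ) * Real.sqrt ((k:ℝ)/2) ^ k := hc
        _ ≤ (7 * Real.exp 1 ^ 2 * (k:ℝ) * 2 ^ k / TSP.s7e ^ k) * Real.sqrt ((k:ℝ)/2) ^ k :=
            mul_le_mul_of_nonneg_right hcardb (by positivity)
        _ = 7 * Real.exp 1 ^ 2 * ((k:ℝ) * (Real.sqrt 2 / TSP.s7e) ^ k) * Real.sqrt (k:ℝ) ^ k := by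
            rw [Real.sqrt_div hknat, div_pow, div_pow, h2k]
            have h2ne : Real.sqrt 2 ≠ 0 := ne_of_gt hs2
            have h7ne : TSP.s7e ≠ 0 := ne_of_gt TSP.s7e_pos
            field_simp
    -- ==== E3 ====
    have hE3 : ∑ i ∈ B3, F i ≤ ((k:ℝ) + 2) * (Real.sqrt 2 / Real.sqrt 3) ^ k
        * Real.sqrt (k:ℝ) ^ k := by
      have hd3 : ∀ i ∈ B3, k/2 + 1 ≤ TSP.ham (p i) (p (i+1)) := by
        intro i hi
        have := hmemB3 i hi
        rw [← hDeq i]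
        omega
      obtain ⟨S3, hS3card, hS3cube, hS3pair⟩ := TSP.band_set hcube hx0 hm B3 hsubB3 (k/2+1) hd3
      have hplot : S3.card ≤ 2 * (k/2+1) := TSP.plotkin S3 hS3cube (k/2+1) hS3pair (by omega)
      have hcard3 : (B3.card : ℝ) ≤ (k:ℝ) + 2 := by
        have h1 : B3.card ≤ k + 2 := by
          rw [← hS3card] at *
          omega
        calc (B3.card : ℝ) ≤ ((k + 2 : ℕ) : ℝ) := Nat.cast_le.mpr h1
          _ = (k:ℝ) + 2 := by push_cast; ring
      have hcost : ∀ i ∈ B3, (TSP.ham (p i) (p (i+1)) : ℝ) ≤ (k:ℝ) * (2/3) := by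
        intro i hi
        have h3 := (hmemB3 i hi).2.2
        have hcast : ((3 * D i : ℕ) : ℝ) ≤ ((2 * k : ℕ) : ℝ) := Nat.cast_le.mpr h3
        push_cast at hcast
        rw [← hDeq i]
        linarith
      have hc := TSP.band_cost hcube hx0 B3 hcost
      calc ∑ i ∈ B3, F i ≤ (B3.card : ℝ) * Real.sqrt ((k:ℝ) * (2/3)) ^ k := hc
        _ ≤ ((k:ℝ) + 2) * Real.sqrt ((k:ℝ) * (2/3)) ^ k :=
            mul_le_mul_of_nonneg_right hcard3 (by positivity)
        _ = ((k:ℝ) + 2) * (Real.sqrt 2 / Real.sqrt 3) ^ k * Real.sqrt (k:ℝ) ^ k := by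
            rw [Real.sqrt_mul hknat, Real.sqrt_div (by norm_num : (0:ℝ) ≤ 2), mul_pow]
            ring
    -- ==== B4 and closing edge ====
    have hql : Real.sqrt (((k-1:ℕ):ℝ)) ^ k ≤ Real.exp (-(1/2)) * Real.sqrt (k:ℝ) ^ k := by
      have h1 : (((k-1:ℕ):ℝ)) ^ k ≤ Real.exp (-1) * (k:ℝ) ^ k := TSP.pow_km1_le k (by omega)
      have h2 : Real.sqrt ((((k-1:ℕ):ℝ)) ^ k) ≤ Real.sqrt (Real.exp (-1) * (k:ℝ) ^ k) :=
        Real.sqrt_le_sqrt h1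
      rw [TSP.sqrt_pow' _ (by positivity) k] at h2
      rw [Real.sqrt_mul (Real.exp_nonneg _), TSP.sqrt_pow' _ hknat k] at h2
      have h3 : Real.sqrt (Real.exp (-1)) = Real.exp (-(1/2)) := by
        rw [show Real.exp (-1) = Real.exp (-(1/2)) * Real.exp (-(1/2)) by
          rw [← Real.exp_add]; norm_num]
        exact Real.sqrt_mul_self (Real.exp_nonneg _)
      rw [h3] at h2
      exact h2
    have hedgeM : ∀ i j : ℕ, TSP.ham (p i) (p j) + 1 ≤ k →
        dist (p i) (p j) ^ k ≤ Real.sqrt (((k-1:ℕ):ℝ)) ^ k := by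
      intro i j hij
      apply TSP.pow_cost_le (hcubeP i) (hcubeP j)
      have : TSP.ham (p i) (p j) ≤ k - 1 := by omega
      exact_mod_cast this
    have hcard4 : B4.card ≤ 1 := by
      rw [Finset.card_le_one]
      have key : ∀ i j : ℕ, i ∈ B4 → j ∈ B4 → i < j → False := by
        intro i j hi hj hij
        obtain ⟨him, hiD⟩ := hmemB4 i hi
        obtain ⟨hjm, hjD⟩ := hmemB4 j hj
        have h1 : D i ≤ TSP.ham (p i) (p j) := by
          rw [hDeq i]
          exact TSP.ham_star hcube hx0 hm hij (by omega)
        have h2 : D i ≤ TSP.ham (p i) (p (j+1)) := by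
          rw [hDeq i]
          exact TSP.ham_star hcube hx0 hm (by omega) (by omega)
        have h3 := TSP.triple_bound (hcubeP i) (hcubeP j) (hcubeP (j+1))
        have h4 : TSP.ham (p j) (p (j+1)) = D j := (hDeq j).symm
        omega
      intro a ha b hb
      by_contra hne
      rcases Nat.lt_or_ge a b with h | h
      · exact key a b ha hb h
      · exact key b a hb ha (by omega)
    have hE4 : ∑ i ∈ B4, F i + dist (p m) (p 0) ^ k
        ≤ Real.sqrt (k:ℝ) ^ k + Real.exp (-(1/2)) * Real.sqrt (k:ℝ) ^ k := by
      rcases Nat.le_one_iff_eq_zero_or_eq_one.mp hcard4 with h0 | h1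
      · rw [Finset.card_eq_zero] at h0
        rw [h0, Finset.sum_empty, zero_add]
        have := hedge m 0
        nlinarith [hql, Real.sqrt_nonneg (((k-1:ℕ):ℝ)), pow_nonneg
          (Real.sqrt_nonneg (((k-1:ℕ):ℝ))) k]
      · obtain ⟨i, hBi⟩ := Finset.card_eq_one.mp h1
        have hiB4 : i ∈ B4 := by rw [hBi]; exact Finset.mem_singleton_self i
        obtain ⟨him, hiD⟩ := hmemB4 i hiB4
        rw [hBi, Finset.sum_singleton]
        by_cases hc3 : 3 * TSP.ham (p m) (p 0) ≤ 2 * k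
        · -- closing edge short
          have hclose : dist (p m) (p 0) ^ k ≤ Real.sqrt (((k-1:ℕ):ℝ)) ^ k := by
            apply hedgeM
            omega
          have := hedge i (i+1)
          have hF : F i ≤ Real.sqrt (k:ℝ) ^ k := this
          nlinarith [hql]
        · -- both long : use triple bound
          have hsum2 : D i + TSP.ham (p m) (p 0) + 1 ≤ 2 * k := by
            rcases Nat.eq_zero_or_pos i with hi0 | hi0
            · subst hi0
              have h3 := TSP.triple_bound (hcubeP 0) (hcubeP 1) (hcubeP m)
              have hne1m : p 1 ≠ p m := TSP.gp_inj hx0 (by omega) (by omega)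
              have hpos := TSP.ham_pos_of_ne hne1m
              have hsymm : TSP.ham (p m) (p 0) = TSP.ham (p 0) (p m) := TSP.ham_symm _ _
              have h4 : TSP.ham (p 0) (p 1) = D 0 := (hDeq 0).symm
              omega
            · have h1 : D i ≤ TSP.ham (p i) (p m) := by
                rw [hDeq i]
                exact TSP.ham_star hcube hx0 hm (by omega) (by omega)
              have h3 := TSP.triple_bound (hcubeP i) (hcubeP m) (hcubeP 0)
              have hne0i : p 0 ≠ p i := TSP.gp_inj hx0 (by omega) (by omega)
              have hpos := TSP.ham_pos_of_ne hne0i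
              have hsymm : TSP.ham (p i) (p 0) = TSP.ham (p 0) (p i) := TSP.ham_symm _ _
              have hsymm2 : TSP.ham (p m) (p 0) = TSP.ham (p 0) (p m) := TSP.ham_symm _ _
              omega
          have hhamle := TSP.ham_le (p i) (p (i+1))
          rw [← hDeq i] at hhamle
          rcases Nat.lt_or_ge (D i) k with hDi | hDi
          · -- F i short-ish
            have hF : F i ≤ Real.sqrt (((k-1:ℕ):ℝ)) ^ k := by
              apply hedgeM
              rw [← hDeq i]
              omega
            have hclose := hedge m 0
            nlinarith [hql]
          · -- then closing is short
            have hDik : D i = k := by omega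
            have hclose : dist (p m) (p 0) ^ k ≤ Real.sqrt (((k-1:ℕ):ℝ)) ^ k := by
              apply hedgeM
              omega
            have hF : F i ≤ Real.sqrt (k:ℝ) ^ k := hedge i (i+1)
            nlinarith [hql]
    -- ==== final assembly ====
    have hcoef := mul_le_mul_of_nonneg_right heps hsqnn
    rw [TSP.epsf] at hcoef
    rw [add_mul, add_mul, add_mul] at hcoef
    have hsplit' := hsplit
    linarith [hE0, hE1, hE2, hE3, hE4, hcoef]
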